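/- Let A be a flat ℤ/p²-algebra, I : A → A a ring automorphism with I(x) ≡ x mod p for all x, and φ : A → A a ring endomorphism with φ(x) ≡ x^p mod p for all x. Set φ' = I ∘ φ ∘ I⁻¹. Then for every x ∈ A there exists y ∈ A with φ(x) - φ'(x) = p·y^p. -/
import Mathlib

/-- In a ring where `p² = 0`, adding a multiple of `p` doesn't change `p`-th powers. -/
lemma pow_add_p_mul (p : ℕ) (hp : p.Prime) (A : Type*) [CommRing A]
    (hp2 : (p : A) ^ 2 = 0) (s t : A) : (s + (p : A) * t) ^ p = s ^ p := by
  rw [add_comm, add_pow, Finset.sum_eq_single 0]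
  · simp
  · intro k hk hk0
    rcases Nat.lt_or_ge k 2 with h | h
    · interval_cases k
      · exact absurd rfl hk0
      · have : (p : A) * t * s ^ (p - 1) * (p.choose 1 : ℕ) = 0 := by
          rw [Nat.choose_one_right]
          push_cast
          linear_combination t * s ^ (p - 1) * hp2
        simpa using this
    · have hz : ((p : A) * t) ^ k = 0 := by
        have hpk : (p : A) ^ k = 0 := by
          have : (p : A) ^ k = (p : A) ^ 2 * (p : A) ^ (k - 2) := by
            rw [← pow_add]; congr 1; omega
          rw [this, hp2, zero_mul]
        rw [mul_pow, hpk, zero_mul]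
      simp [hz]
  · intro h
    exact absurd (Finset.mem_range.mpr (Nat.succ_pos p)) h

/-- Let `A` be a flat `ℤ/p²`-algebra (so `p² = 0` in `A` and `p`-torsion is `p·A`),
`I : A ≃+* A` a ring automorphism congruent to the identity mod `p`, and
`φ : A →+* A` a ring endomorphism with `φ(x) ≡ x^p mod p`.  Set `φ' = I ∘ φ ∘ I⁻¹`.
Then for every `x ∈ A` there exists `y ∈ A` with `φ(x) - φ'(x) = p·y^p`. -/
theorem stmt0 (p : ℕ) (hp : p.Prime) (A : Type*) [CommRing A]
    (hp2 : (p : A) ^ 2 = 0)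
    (hflat : ∀ x : A, (p : A) * x = 0 → ∃ y : A, x = (p : A) * y)
    (I : A ≃+* A) (hI : ∀ x : A, ∃ y : A, I x - x = (p : A) * y)
    (φ : A →+* A) (hφ : ∀ x : A, ∃ y : A, φ x - x ^ p = (p : A) * y)
    (x : A) :
    ∃ y : A, φ x - I (φ (I.symm x)) = (p : A) * y ^ p := by
  set z := I.symm x with hz
  obtain ⟨a, ha⟩ := hI z
  rw [I.apply_symm_apply] at ha
  -- ha : x - z = p * a
  obtain ⟨e, he⟩ := hφ a
  obtain ⟨u, hu⟩ := hφ z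
  obtain ⟨d, hd⟩ := hI u
  refine ⟨a, ?_⟩
  have hx : x = z + (p : A) * a := by linear_combination ha
  have h1 : φ x = φ z + (p : A) * φ a := by
    rw [hx, map_add, map_mul, map_natCast]
  have h2 : (p : A) * φ a = (p : A) * a ^ p := by
    have hfa : φ a = a ^ p + (p : A) * e := by linear_combination he
    rw [hfa]
    linear_combination e * hp2
  have h3 : I (φ z) = φ z := by
    have hφz : φ z = z ^ p + (p : A) * u := by linear_combination hu
    have hIz : I z = x := I.apply_symm_apply x
    rw [hφz, map_add, map_mul, map_natCast, map_pow, hIz, hx,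
      pow_add_p_mul p hp A hp2 z a]
    have hIu : (p : A) * I u = (p : A) * u := by
      have : I u = u + (p : A) * d := by linear_combination hd
      rw [this]
      linear_combination d * hp2
    rw [hIu]
  rw [h3, h1]
  linear_combination h2
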